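/- Let X₁, X₂, ... be i.i.d. random variables with characteristic function φ satisfying |1 - φ(x)| ≤ c|x|^β for all x ∈ ℝ, with 0 < β ≤ 2, c > 0, and let S_n = Σ_{j≤n} X_j. Then there is a universal constant A > 0 such that P(|S_n| > t·n^{1/β}) ≤ A·c·t^{-β} for all t > 0 and all n ≥ 1. -/

import Mathlib

open MeasureTheory ProbabilityTheory Real

noncomputable section

namespace Stmt18Aux

variable {Ω : Type} [MeasurableSpace Ω] {μ : Measure Ω} [IsProbabilityMeasure μ]

/-- The integrand of the characteristic function. -/
def ker (x y : ℝ) : ℂ := Complex.exp (Complex.I * ((x * y : ℝ) : ℂ))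

lemma norm_ker (x y : ℝ) : ‖ker x y‖ = 1 := by
  rw [ker, mul_comm, Complex.norm_exp_ofReal_mul_I]

lemma continuous_ker (x : ℝ) : Continuous fun y => ker x y := by
  unfold ker
  fun_prop

lemma integrable_ker (x : ℝ) {Y : Ω → ℝ} (hY : Measurable Y) :
    Integrable (fun ω => ker x (Y ω)) μ := by
  refine ⟨((continuous_ker x).measurable.comp hY).aestronglyMeasurable, ?_⟩
  refine HasFiniteIntegral.of_bounded (C := 1) ?_
  filter_upwards with ω
  rw [norm_ker]

/-- The characteristic function of `Y` under `μ`. -/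
def cf (μ : Measure Ω) (Y : Ω → ℝ) (x : ℝ) : ℂ := ∫ ω, ker x (Y ω) ∂μ

lemma cf_eq_of_identDistrib {U V : Ω → ℝ} (h : IdentDistrib U V μ μ) (x : ℝ) :
    cf μ U x = cf μ V x :=
  (h.comp (continuous_ker x).measurable).integral_eq

lemma norm_cf_le_one (Y : Ω → ℝ) (x : ℝ) : ‖cf μ Y x‖ ≤ 1 := by
  calc ‖cf μ Y x‖ ≤ ∫ ω, ‖ker x (Y ω)‖ ∂μ := norm_integral_le_integral_norm _
  _ = 1 := by simp only [norm_ker]; simp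

lemma integral_complex_mul {F G : Ω → ℂ} (h : IndepFun F G μ)
    (hF : AEMeasurable F μ) (hG : AEMeasurable G μ) :
    ∫ ω, F ω * G ω ∂μ = (∫ ω, F ω ∂μ) * ∫ ω, G ω ∂μ := by
  rw [indepFun_iff_map_prod_eq_prod_map_map hF hG] at h
  have hmul : AEStronglyMeasurable (fun p : ℂ × ℂ => p.1 * p.2)
      (μ.map fun ω => (F ω, G ω)) :=
    (continuous_fst.mul continuous_snd).aestronglyMeasurable
  have h1 : ∫ ω, F ω * G ω ∂μ
      = ∫ p : ℂ × ℂ, p.1 * p.2 ∂(μ.map fun ω => (F ω, G ω)) :=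
    (integral_map (hF.prodMk hG) hmul).symm
  rw [h1, h, integral_prod_mul (fun x : ℂ => x) (fun x : ℂ => x),
    integral_map (f := fun x : ℂ => x) hF aestronglyMeasurable_id,
    integral_map (f := fun x : ℂ => x) hG aestronglyMeasurable_id]

lemma cf_add {U V : Ω → ℝ} (hU : Measurable U) (hV : Measurable V)
    (h : IndepFun U V μ) (x : ℝ) :
    cf μ (fun ω => U ω + V ω) x = cf μ U x * cf μ V x := by
  have hker : ∀ ω, ker x (U ω + V ω) = ker x (U ω) * ker x (V ω) := by
    intro ω
    simp only [ker]
    rw [← Complex.exp_add]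
    congr 1
    push_cast
    ring
  have hind : IndepFun (fun ω => ker x (U ω)) (fun ω => ker x (V ω)) μ :=
    h.comp (continuous_ker x).measurable (continuous_ker x).measurable
  calc cf μ (fun ω => U ω + V ω) x = ∫ ω, ker x (U ω) * ker x (V ω) ∂μ := by
        simp only [cf, hker]
  _ = (∫ ω, ker x (U ω) ∂μ) * ∫ ω, ker x (V ω) ∂μ :=
        integral_complex_mul hind
          ((continuous_ker x).measurable.comp hU).aemeasurable
          ((continuous_ker x).measurable.comp hV).aemeasurable
  _ = cf μ U x * cf μ V x := rfl

lemma cf_sum {X : ℕ → Ω → ℝ} (hX : ∀ i, Measurable (X i))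
    (hind : iIndepFun X μ)
    (hid : ∀ i, IdentDistrib (X i) (X 0) μ μ) (x : ℝ) (n : ℕ) :
    cf μ (fun ω => ∑ j ∈ Finset.Icc 1 n, X j ω) x = (cf μ (X 0) x) ^ n := by
  induction n with
  | zero =>
    simp only [Finset.Icc_self, pow_zero]
    simp [cf, ker]
  | succ n ih =>
    have hnotmem : (n + 1) ∉ Finset.Icc 1 n := by simp
    have hins : Finset.Icc 1 (n + 1) = insert (n + 1) (Finset.Icc 1 n) :=
      (Finset.insert_Icc_right_eq_Icc_add_one (by omega)).symm
    have hsum : (fun ω => ∑ j ∈ Finset.Icc 1 (n + 1), X j ω)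
        = fun ω => (∑ j ∈ Finset.Icc 1 n, X j ω) + X (n + 1) ω := by
      funext ω
      rw [hins, Finset.sum_insert hnotmem]
      ring
    have hindep : IndepFun (∑ j ∈ Finset.Icc 1 n, X j) (X (n + 1)) μ :=
      hind.indepFun_finsetSum_of_notMem hX hnotmem
    have hindep' : IndepFun (fun ω => ∑ j ∈ Finset.Icc 1 n, X j ω) (X (n + 1)) μ := by
      have : (∑ j ∈ Finset.Icc 1 n, X j) = fun ω => ∑ j ∈ Finset.Icc 1 n, X j ω := by
        funext ω; simp
      rwa [this] at hindep
    rw [hsum, cf_add (by fun_prop) (hX (n + 1)) hindep', ih,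
      cf_eq_of_identDistrib (hid (n + 1)) x, pow_succ]

lemma norm_pow_sub_one_le {z : ℂ} (hz : ‖z‖ ≤ 1) (n : ℕ) :
    ‖z ^ n - 1‖ ≤ n * ‖z - 1‖ := by
  induction n with
  | zero => simp
  | succ n ih =>
    have hdecomp : z ^ (n + 1) - 1 = z ^ n * (z - 1) + (z ^ n - 1) := by ring
    have hzn : ‖z ^ n‖ ≤ 1 := by
      rw [norm_pow]; exact pow_le_one₀ (norm_nonneg z) hz
    calc ‖z ^ (n + 1) - 1‖ ≤ ‖z ^ n * (z - 1)‖ + ‖z ^ n - 1‖ := by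
          rw [hdecomp]; exact norm_add_le _ _
    _ ≤ 1 * ‖z - 1‖ + n * ‖z - 1‖ := by
          have h1 : ‖z ^ n * (z - 1)‖ ≤ 1 * ‖z - 1‖ := by
            rw [norm_mul]
            exact mul_le_mul_of_nonneg_right hzn (norm_nonneg _)
          exact add_le_add h1 ih
    _ = (n + 1 : ℕ) * ‖z - 1‖ := by push_cast; ring

lemma integrable_cos (x : ℝ) {Y : Ω → ℝ} (hY : Measurable Y) :
    Integrable (fun ω => Real.cos (x * Y ω)) μ := by
  refine ⟨(Real.continuous_cos.measurable.comp
    (measurable_const.mul hY)).aestronglyMeasurable, ?_⟩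
  refine HasFiniteIntegral.of_bounded (C := 1) ?_
  filter_upwards with ω
  rw [Real.norm_eq_abs]
  exact Real.abs_cos_le_one _

lemma re_cf {Y : Ω → ℝ} (hY : Measurable Y) (x : ℝ) :
    (cf μ Y x).re = ∫ ω, Real.cos (x * Y ω) ∂μ := by
  have h := integral_re (𝕜 := ℂ) (integrable_ker (μ := μ) x hY)
  simp only [RCLike.re_to_complex] at h
  rw [cf, ← h]
  congr 1
  funext ω
  rw [ker, mul_comm]
  exact Complex.exp_ofReal_mul_I_re _

/-- The key truncation estimate. -/
lemma key {Y : Ω → ℝ} (hY : Measurable Y) {u B : ℝ} (hu : 0 < u)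
    (hB : ∀ x ∈ Set.Ioc (0 : ℝ) u, 1 - (cf μ Y x).re ≤ B) :
    (μ {ω | 2 / u < |Y ω|}).toReal * (u / 2) ≤ u * B := by
  set ν : Measure ℝ := volume.restrict (Set.Ioc 0 u) with hν
  haveI : IsFiniteMeasure ν := by
    constructor
    rw [hν, Measure.restrict_apply_univ, Real.volume_Ioc]
    exact ENNReal.ofReal_lt_top
  set F : ℝ × Ω → ℝ := fun p => 1 - Real.cos (p.1 * Y p.2) with hF
  have hFmeas : Measurable F :=
    measurable_const.sub ((measurable_fst.mul (hY.comp measurable_snd)).cos)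
  have hFint : Integrable F (ν.prod μ) := by
    refine ⟨hFmeas.aestronglyMeasurable, ?_⟩
    refine HasFiniteIntegral.of_bounded (C := 2) ?_
    filter_upwards with p
    rw [Real.norm_eq_abs]
    show |1 - Real.cos (p.1 * Y p.2)| ≤ 2
    have h1 := Real.neg_one_le_cos (p.1 * Y p.2)
    have h2 := Real.cos_le_one (p.1 * Y p.2)
    rw [abs_le]; constructor <;> linarith
  -- Fubini
  have hswap : ∫ x, (∫ ω, F (x, ω) ∂μ) ∂ν = ∫ ω, (∫ x, F (x, ω) ∂ν) ∂μ :=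
    integral_integral_swap (f := fun x ω => F (x, ω)) hFint
  -- inner integral in ω equals 1 - re cf
  have hinner : ∀ x, ∫ ω, F (x, ω) ∂μ = 1 - (cf μ Y x).re := by
    intro x
    rw [re_cf hY x, hF]
    rw [integral_sub (integrable_const 1) (integrable_cos x hY)]
    simp
  set g : Ω → ℝ := fun ω => ∫ x, F (x, ω) ∂ν with hg
  have hgint : Integrable g μ := hFint.integral_prod_right
  have hgnonneg : ∀ ω, 0 ≤ g ω := by
    intro ω
    refine integral_nonneg fun x => ?_
    have h1 := Real.cos_le_one (x * Y ω)
    show 0 ≤ 1 - Real.cos (x * Y ω)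
    linarith
  set s : Set Ω := {ω | 2 / u < |Y ω|} with hs
  have hsmeas : MeasurableSet s := measurableSet_lt measurable_const hY.abs
  -- lower bound on s
  have hglb : ∀ ω ∈ s, u / 2 ≤ g ω := by
    intro ω hω
    have ha : 2 / u < |Y ω| := hω
    set a : ℝ := Y ω with hadef
    have ha0 : 0 < |a| := lt_trans (by positivity) ha
    have hane : a ≠ 0 := by
      intro h; rw [h] at ha0; simp at ha0
    -- compute g ω
    have hcalc : g ω = u - Real.sin (u * a) / a := by
      have h1 : g ω = ∫ x in (0 : ℝ)..u, (1 - Real.cos (x * a)) := by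
        rw [intervalIntegral.integral_of_le hu.le]
      have hInt : IntervalIntegrable (fun x => Real.cos (x * a)) volume 0 u :=
        Continuous.intervalIntegrable (by fun_prop) 0 u
      rw [h1, intervalIntegral.integral_sub intervalIntegrable_const hInt,
        intervalIntegral.integral_const,
        intervalIntegral.integral_comp_mul_right Real.cos hane, integral_cos]
      simp [smul_eq_mul, div_eq_inv_mul]
    rw [hcalc]
    have hsin : Real.sin (u * a) / a ≤ 1 / |a| := by
      calc Real.sin (u * a) / a ≤ |Real.sin (u * a) / a| := le_abs_self _
      _ = |Real.sin (u * a)| / |a| := abs_div _ _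
      _ ≤ 1 / |a| := by gcongr; exact Real.abs_sin_le_one _
    have hinv : 1 / |a| < u / 2 := by
      rw [div_lt_div_iff₀ ha0 (by norm_num : (0:ℝ) < 2)]
      rw [div_lt_iff₀ hu] at ha
      linarith
    linarith
  -- chain
  have hchain1 : (μ s).toReal * (u / 2) ≤ ∫ ω in s, g ω ∂μ := by
    have : ∫ ω in s, (u / 2) ∂μ ≤ ∫ ω in s, g ω ∂μ := by
      refine setIntegral_mono_on (integrableOn_const (measure_lt_top μ s).ne)
        hgint.integrableOn hsmeas hglb
    rwa [setIntegral_const, smul_eq_mul] at this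
  have hchain2 : ∫ ω in s, g ω ∂μ ≤ ∫ ω, g ω ∂μ :=
    setIntegral_le_integral hgint (Filter.Eventually.of_forall hgnonneg)
  have hchain3 : ∫ ω, g ω ∂μ = ∫ x, (1 - (cf μ Y x).re) ∂ν := by
    rw [← hswap]
    exact integral_congr_ae (Filter.Eventually.of_forall fun x => hinner x)
  have hchain4 : ∫ x, (1 - (cf μ Y x).re) ∂ν ≤ u * B := by
    have hint1 : Integrable (fun x => 1 - (cf μ Y x).re) ν := by
      have := hFint.integral_prod_left
      refine this.congr (Filter.Eventually.of_forall fun x => hinner x)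
    calc ∫ x, (1 - (cf μ Y x).re) ∂ν ≤ ∫ _x, B ∂ν := by
          refine integral_mono_ae hint1 (integrable_const B) ?_
          have hae : ∀ᵐ x ∂ν, (1 - (cf μ Y x).re) ≤ B := by
            rw [hν, ae_restrict_iff' measurableSet_Ioc]
            filter_upwards with x hx
            exact hB x hx
          exact hae
    _ = (ν Set.univ).toReal * B := by rw [integral_const, smul_eq_mul]; rfl
    _ ≤ u * B := by
          have hν1 : (ν Set.univ).toReal ≤ u := by
            rw [hν, Measure.restrict_apply_univ, Real.volume_Ioc]
            rw [ENNReal.toReal_ofReal (by linarith)]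
            linarith
          have hBnn : 0 ≤ B := le_trans (by
            have := hB u ⟨hu, le_rfl⟩
            have hre : (cf μ Y u).re ≤ 1 := by
              have h1 := norm_cf_le_one (μ := μ) Y u
              have := Complex.re_le_norm (cf μ Y u)
              linarith
            linarith : (0:ℝ) ≤ 1 - (cf μ Y u).re) (hB u ⟨hu, le_rfl⟩)
          gcongr
  linarith [hchain1, hchain2, hchain3.le, hchain4]

end Stmt18Aux

end

open Stmt18Aux in
theorem stmt18 :
    ∃ A : ℝ, 0 < A ∧
      ∀ (Ω : Type) (_ : MeasurableSpace Ω) (μ : Measure Ω), IsProbabilityMeasure μ →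
        ∀ (X : ℕ → Ω → ℝ), (∀ i, Measurable (X i)) →
          iIndepFun X μ →
          (∀ i, IdentDistrib (X i) (X 0) μ μ) →
          ∀ (φ : ℝ → ℂ),
            (∀ t : ℝ, φ t = ∫ ω, Complex.exp (Complex.I * ((t * X 0 ω : ℝ) : ℂ)) ∂μ) →
            ∀ (c β : ℝ), 0 < c → 0 < β → β ≤ 2 →
              (∀ x : ℝ, ‖1 - φ x‖ ≤ c * |x| ^ β) →
              ∀ (S : ℕ → Ω → ℝ), (∀ n ω, S n ω = ∑ j ∈ Finset.Icc 1 n, X j ω) →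
                ∀ (t : ℝ), 0 < t → ∀ (n : ℕ), 1 ≤ n →
                  (μ {ω | t * (n : ℝ) ^ (1 / β) < |S n ω|}).toReal
                    ≤ A * c * t ^ (-β) := by
  refine ⟨8, by norm_num, ?_⟩
  intro Ω mΩ μ hμ X hXmeas hXind hXid φ hφ c β hc hβ hβ2 hφbound S hS t ht n hn
  haveI := hμ
  -- setup
  set N : ℝ := (n : ℝ) ^ (1 / β) with hN
  have hn0 : (0 : ℝ) < n := by exact_mod_cast hn
  have hN0 : 0 < N := Real.rpow_pos_of_pos hn0 _
  set u : ℝ := 2 / (t * N) with hu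
  have htN : 0 < t * N := mul_pos ht hN0
  have hu0 : 0 < u := by positivity
  have h2u : 2 / u = t * N := by
    rw [hu]; field_simp
  -- φ is the cf of X 0
  have hφcf : ∀ x, φ x = cf μ (X 0) x := by
    intro x; rw [hφ x]; rfl
  -- the sum
  set Y : Ω → ℝ := fun ω => ∑ j ∈ Finset.Icc 1 n, X j ω with hY
  have hYmeas : Measurable Y := by
    rw [hY]; exact Finset.measurable_sum _ fun j _ => hXmeas j
  -- bound on 1 - re cf of the sum
  set B : ℝ := n * (c * u ^ β) with hB
  have hbound : ∀ x ∈ Set.Ioc (0 : ℝ) u, 1 - (cf μ Y x).re ≤ B := by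
    intro x hx
    have hcf : cf μ Y x = (cf μ (X 0) x) ^ n := cf_sum hXmeas hXind hXid x n
    have h1 : 1 - (cf μ Y x).re ≤ ‖1 - cf μ Y x‖ := by
      have h2 := Complex.re_le_norm (1 - cf μ Y x)
      simpa using h2
    have h3 : ‖1 - cf μ Y x‖ = ‖(cf μ (X 0) x) ^ n - 1‖ := by
      rw [hcf, norm_sub_rev]
    have h4 : ‖(cf μ (X 0) x) ^ n - 1‖ ≤ n * ‖cf μ (X 0) x - 1‖ :=
      norm_pow_sub_one_le (norm_cf_le_one _ _) n
    have h5 : ‖cf μ (X 0) x - 1‖ = ‖1 - φ x‖ := by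
      rw [hφcf x, norm_sub_rev]
    have h6 : ‖1 - φ x‖ ≤ c * |x| ^ β := hφbound x
    have h7 : c * |x| ^ β ≤ c * u ^ β := by
      have hxu : |x| ≤ u := by rw [abs_of_pos hx.1]; exact hx.2
      have : |x| ^ β ≤ u ^ β :=
        Real.rpow_le_rpow (abs_nonneg x) hxu hβ.le
      nlinarith
    calc 1 - (cf μ Y x).re ≤ ‖1 - cf μ Y x‖ := h1
    _ = ‖(cf μ (X 0) x) ^ n - 1‖ := h3
    _ ≤ n * ‖cf μ (X 0) x - 1‖ := h4
    _ = n * ‖1 - φ x‖ := by rw [h5]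
    _ ≤ n * (c * |x| ^ β) := by
          have : (0:ℝ) ≤ n := hn0.le
          nlinarith [hφbound x]
    _ ≤ n * (c * u ^ β) := by
          have : (0:ℝ) ≤ n := hn0.le
          nlinarith [h7]
  -- apply key lemma
  have hkey := key (μ := μ) hYmeas hu0 hbound
  -- identify the sets
  have hset : {ω | t * N < |S n ω|} = {ω | 2 / u < |Y ω|} := by
    ext ω
    simp only [Set.mem_setOf_eq, h2u, hS n ω, hY]
  -- arithmetic: from P * (u/2) ≤ u * B derive P ≤ 2 B
  have hP : (μ {ω | t * N < |S n ω|}).toReal ≤ 2 * B := by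
    rw [hset]
    have h8 := hkey
    have hu2 : 0 < u / 2 := by positivity
    calc (μ {ω | 2 / u < |Y ω|}).toReal
        = ((μ {ω | 2 / u < |Y ω|}).toReal * (u / 2)) / (u / 2) := by field_simp
    _ ≤ (u * B) / (u / 2) := by gcongr
    _ = 2 * B := by field_simp
  -- compute 2 * B ≤ 8 * c * t ^ (-β)
  have hNβ : N ^ β = (n : ℝ) := by
    rw [hN, ← Real.rpow_mul hn0.le, one_div, inv_mul_cancel₀ hβ.ne', Real.rpow_one]
  have huβ : u ^ β = 2 ^ β / (t ^ β * (n : ℝ)) := by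
    rw [hu, Real.div_rpow (by norm_num) htN.le, Real.mul_rpow ht.le hN0.le, hNβ]
  have h2β : (2 : ℝ) ^ β ≤ 4 := by
    have h := Real.rpow_le_rpow_of_exponent_le (by norm_num : (1:ℝ) ≤ 2) hβ2
    have h4 : (2 : ℝ) ^ (2 : ℝ) = 4 := by
      rw [show (2:ℝ) = ((2:ℕ):ℝ) from by norm_num, Real.rpow_natCast]
      norm_num
    linarith
  have htβ : (0 : ℝ) < t ^ β := Real.rpow_pos_of_pos ht β
  have h2βpos : (0 : ℝ) < (2 : ℝ) ^ β := Real.rpow_pos_of_pos (by norm_num) β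
  have hBval : 2 * B = 2 * c * (2 ^ β) * (t ^ β)⁻¹ := by
    rw [hB, huβ]
    field_simp
  have hfinal : 2 * B ≤ 8 * c * t ^ (-β) := by
    rw [hBval, Real.rpow_neg ht.le]
    have : 2 * c * 2 ^ β ≤ 8 * c := by nlinarith
    have hinv : (0:ℝ) ≤ (t ^ β)⁻¹ := by positivity
    nlinarith
  calc (μ {ω | t * N < |S n ω|}).toReal ≤ 2 * B := hP
  _ ≤ 8 * c * t ^ (-β) := hfinal
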